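/- Let λ₋ and λ₊ be two bounded measured geodesic laminations on ℍ² that strongly fill. Then there exist ε > 0 and L > 0 with the following property: if (p,q) is in the support of λ₊ and z₁, z₂ ∈ g(p,q) satisfy dist(z₁,z₂) ≥ L, and (p′,q′) is in the support of λ₋ and w₁, w₂ ∈ g(p′,q′) satisfy dist(w₁,w₂) ≥ L, then at least one of z₁, z₂ is at hyperbolic distance at least ε from the geodesic segment γ₋ := {w ∈ g(p′,q′) : dist(w₁,w) + dist(w,w₂) = dist(w₁,w₂)}; that is, max(infDist(z₁, γ₋), infDist(z₂, γ₋)) ≥ ε. -/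

import Mathlib

/- Upper half-plane model of ℍ², ideal boundary ∂∞ℍ² = OnePoint ℝ,
   geodesics, measured geodesic laminations. -/

noncomputable section
open MeasureTheory Set
open scoped ENNReal

/-- The geodesic of ℍ² with ideal endpoints `p q ∈ ℝ ∪ {∞}`: the Euclidean
semicircle over the real axis with endpoints `p, q` (the vertical half-line
over `p` if `q = ∞`, and vice versa). -/
def geodesic (p q : OnePoint ℝ) : Set UpperHalfPlane :=
  {z | (∃ x y : ℝ, p = (x : OnePoint ℝ) ∧ q = (y : OnePoint ℝ) ∧
          ‖(z : ℂ) - (((x + y) / 2 : ℝ) : ℂ)‖ = |y - x| / 2) ∨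
       (∃ x : ℝ, ((p = (x : OnePoint ℝ) ∧ q = OnePoint.infty) ∨
                  (p = OnePoint.infty ∧ q = (x : OnePoint ℝ))) ∧
          (z : ℂ).re = x)}

/-- `g(p,q)` separates `z` and `w`: both lie off the geodesic, in two
different connected components of its complement. -/
def Separates (p q : OnePoint ℝ) (z w : UpperHalfPlane) : Prop :=
  z ∉ geodesic p q ∧ w ∉ geodesic p q ∧
    connectedComponentIn (geodesic p q)ᶜ z ≠ connectedComponentIn (geodesic p q)ᶜ w

/-- Two pairs of ideal endpoints are unlinked: the corresponding geodesics do not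
cross, i.e. they are equal or disjoint. -/
def Unlinked (p q p' q' : OnePoint ℝ) : Prop :=
  geodesic p q = geodesic p' q' ∨ geodesic p q ∩ geodesic p' q' = ∅

instance : MeasurableSpace (OnePoint ℝ) := borel _

/-- Topological support of a measure. -/
def mSupport (μ : Measure (OnePoint ℝ × OnePoint ℝ)) : Set (OnePoint ℝ × OnePoint ℝ) :=
  {x | ∀ U : Set (OnePoint ℝ × OnePoint ℝ), IsOpen U → x ∈ U → 0 < μ U}

/-- A measured geodesic lamination on ℍ², encoded as a Borel measure on pairs of
distinct ideal endpoints: it gives no mass to the diagonal, is locally finite off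
the diagonal, is invariant under swapping endpoints, and any two pairs in its
support are unlinked. -/
structure MeasuredLamination where
  μ : Measure (OnePoint ℝ × OnePoint ℝ)
  diag_null : μ {x | x.1 = x.2} = 0
  locFin : ∀ x : OnePoint ℝ × OnePoint ℝ, x.1 ≠ x.2 →
    ∃ U : Set (OnePoint ℝ × OnePoint ℝ), IsOpen U ∧ x ∈ U ∧ μ U < ⊤
  symm : μ.map Prod.swap = μ
  unlinked : ∀ x ∈ mSupport μ, ∀ y ∈ mSupport μ, x.1 ≠ x.2 → y.1 ≠ y.2 →
    Unlinked x.1 x.2 y.1 y.2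

/-- Intersection number `i([z,w], λ)` of a lamination with the geodesic segment
`[z,w]`: the mass of the set of leaves separating `z` from `w`. -/
def interNum (L : MeasuredLamination) (z w : UpperHalfPlane) : ℝ≥0∞ :=
  L.μ {pq : OnePoint ℝ × OnePoint ℝ | Separates pq.1 pq.2 z w}

/-- A measured geodesic lamination is bounded if geodesic segments of length at
most 1 have uniformly bounded intersection with it. -/
def MeasuredLamination.Bounded (L : MeasuredLamination) : Prop :=
  ∃ C : ℝ, 0 < C ∧ ∀ z w : UpperHalfPlane, dist z w ≤ 1 →
    interNum L z w ≤ ENNReal.ofReal C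

/-- Two measured geodesic laminations strongly fill if long geodesic segments
have large total intersection with them. -/
def StronglyFill (L M : MeasuredLamination) : Prop :=
  ∀ ε : ℝ, 0 < ε → ∃ c : ℝ, 0 < c ∧ ∀ z w : UpperHalfPlane, c ≤ dist z w →
    ENNReal.ofReal ε ≤ interNum L z w + interNum M z w

/-- The Cayley transform `∂∞ℍ² → S¹ ⊆ ℂ`, `x ↦ (x−i)/(x+i)`, `∞ ↦ 1`. -/
def cayley (x : OnePoint ℝ) : ℂ :=
  OnePoint.rec 1 (fun a : ℝ => ((a : ℂ) - Complex.I) / ((a : ℂ) + Complex.I)) x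

/-- The visual metric on `∂∞ℍ²` viewed from `i`. -/
def dVis (x y : OnePoint ℝ) : ℝ := ‖cayley x - cayley y‖


open scoped UpperHalfPlane

/-! ### Auxiliary lemmas -/

lemma geodesic_coe_coe (x y : ℝ) : geodesic (x : OnePoint ℝ) (y : OnePoint ℝ) =
    {z : ℍ | ‖(z : ℂ) - (((x + y) / 2 : ℝ) : ℂ)‖ = |y - x| / 2} := by
  ext z
  simp [geodesic, OnePoint.coe_eq_coe, OnePoint.coe_ne_infty, eq_comm]

lemma geodesic_coe_infty (x : ℝ) : geodesic (x : OnePoint ℝ) OnePoint.infty =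
    {z : ℍ | (z : ℂ).re = x} := by
  ext z
  simp [geodesic, OnePoint.coe_eq_coe, OnePoint.coe_ne_infty, OnePoint.infty_ne_coe, eq_comm]

lemma geodesic_infty_coe (x : ℝ) : geodesic OnePoint.infty (x : OnePoint ℝ) =
    {z : ℍ | (z : ℂ).re = x} := by
  ext z
  simp [geodesic, OnePoint.coe_eq_coe, OnePoint.coe_ne_infty, OnePoint.infty_ne_coe, eq_comm]

lemma geodesic_infty_infty : geodesic (OnePoint.infty : OnePoint ℝ) OnePoint.infty = ∅ := by
  ext z
  simp [geodesic, OnePoint.infty_ne_coe]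

lemma geodesic_coe_coe_self (x : ℝ) : geodesic (x : OnePoint ℝ) (x : OnePoint ℝ) = ∅ := by
  rw [geodesic_coe_coe]
  ext z
  simp only [mem_setOf_eq, mem_empty_iff_false, iff_false]
  intro h
  rw [sub_self, abs_zero, zero_div, norm_eq_zero, sub_eq_zero] at h
  have him : (z : ℂ).im = 0 := by rw [h]; simp
  exact z.im_pos.ne' (by simpa [UpperHalfPlane.coe_im] using him)

lemma ne_of_mem_geodesic {p q : OnePoint ℝ} {z : ℍ} (h : z ∈ geodesic p q) : p ≠ q := by
  rintro rfl
  rcases h with ⟨x, y, hx, hy, habs⟩ | ⟨x, (⟨hx, hy⟩ | ⟨hx, hy⟩), _⟩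
  · rw [hx] at hy
    obtain rfl : x = y := OnePoint.coe_eq_coe.mp hy
    have : z ∈ geodesic (x : OnePoint ℝ) (x : OnePoint ℝ) := by
      rw [geodesic_coe_coe]; exact habs
    rw [geodesic_coe_coe_self] at this
    exact this
  · rw [hx] at hy; exact OnePoint.coe_ne_infty x hy
  · rw [hy] at hx; exact OnePoint.coe_ne_infty x hx

lemma isPreconnected_vert (x : ℝ) : IsPreconnected {z : ℍ | (z : ℂ).re = x} := by
  apply UpperHalfPlane.isEmbedding_coe.toIsInducing.isPreconnected_image.mp
  have himg : (UpperHalfPlane.coe '' {z : ℍ | (z : ℂ).re = x}) =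
      (fun t : ℝ => (x : ℂ) + t * Complex.I) '' Ioi 0 := by
    ext w
    constructor
    · rintro ⟨z, hz, rfl⟩
      refine ⟨(z : ℂ).im, by simpa [UpperHalfPlane.coe_im] using z.im_pos, ?_⟩
      have hz' : ((z : ℂ)).re = x := hz
      apply Complex.ext <;> simp [← hz']
    · rintro ⟨t, ht, rfl⟩
      refine ⟨UpperHalfPlane.mk ((x : ℂ) + t * Complex.I) (by simpa using ht), by simp, rfl⟩
  rw [himg]
  exact isPreconnected_Ioi.image _ (by fun_prop)

lemma isPreconnected_circle (m r : ℝ) (hr : 0 < r) :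
    IsPreconnected {z : ℍ | ‖(z : ℂ) - (m : ℂ)‖ = r} := by
  apply UpperHalfPlane.isEmbedding_coe.toIsInducing.isPreconnected_image.mp
  have himg : (UpperHalfPlane.coe '' {z : ℍ | ‖(z : ℂ) - (m : ℂ)‖ = r}) =
      (fun t : ℝ => (t : ℂ) + (Real.sqrt (r ^ 2 - (t - m) ^ 2) : ℝ) * Complex.I) ''
        Ioo (m - r) (m + r) := by
    ext w
    constructor
    · rintro ⟨z, hz, rfl⟩
      simp only [mem_setOf_eq] at hz
      set a := (z : ℂ).re with ha
      set b := (z : ℂ).im with hb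
      have hbpos : 0 < b := by simpa [hb, UpperHalfPlane.coe_im] using z.im_pos
      have h2 : (a - m) ^ 2 + b ^ 2 = r ^ 2 := by
        have h := congrArg (fun s => s ^ 2) hz
        simp only [Complex.sq_norm, Complex.normSq_apply, Complex.sub_re, Complex.sub_im,
          Complex.ofReal_re, Complex.ofReal_im, sub_zero] at h
        rw [← h]; ring
      refine ⟨a, ?_, ?_⟩
      · constructor <;> nlinarith [sq_nonneg (a - m), hbpos]
      · apply Complex.ext
        · simp [ha, ← UpperHalfPlane.coe_re]
        · have : r ^ 2 - (a - m) ^ 2 = b ^ 2 := by linarith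
          simp [this, Real.sqrt_sq hbpos.le, hb, ← UpperHalfPlane.coe_im] <;> exact Real.sqrt_sq hbpos.le
    · rintro ⟨t, ht, rfl⟩
      have hpos : 0 < r ^ 2 - (t - m) ^ 2 := by nlinarith [ht.1, ht.2]
      have hspos : 0 < Real.sqrt (r ^ 2 - (t - m) ^ 2) := Real.sqrt_pos.mpr hpos
      refine ⟨UpperHalfPlane.mk ((t : ℂ) + (Real.sqrt (r ^ 2 - (t - m) ^ 2) : ℝ) * Complex.I)
        (by simpa using hspos), ?_, rfl⟩
      simp only [mem_setOf_eq, UpperHalfPlane.coe_mk]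
      have heq : (t : ℂ) + (Real.sqrt (r ^ 2 - (t - m) ^ 2) : ℝ) * Complex.I - (m : ℂ) =
          ((t - m : ℝ) : ℂ) + (Real.sqrt (r ^ 2 - (t - m) ^ 2) : ℝ) * Complex.I := by
        push_cast; ring
      rw [heq, Complex.norm_add_mul_I, Real.sq_sqrt hpos.le]
      rw [show (t - m) ^ 2 + (r ^ 2 - (t - m) ^ 2) = r ^ 2 by ring]
      exact Real.sqrt_sq hr.le
  rw [himg]
  exact isPreconnected_Ioo.image _ (by fun_prop)

lemma isPreconnected_geodesic (p q : OnePoint ℝ) : IsPreconnected (geodesic p q) := by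
  induction p using OnePoint.rec with
  | infty =>
    induction q using OnePoint.rec with
    | infty => rw [geodesic_infty_infty]; exact isPreconnected_empty
    | coe y => rw [geodesic_infty_coe]; exact isPreconnected_vert y
  | coe x =>
    induction q using OnePoint.rec with
    | infty => rw [geodesic_coe_infty]; exact isPreconnected_vert x
    | coe y =>
      rcases eq_or_ne x y with rfl | hxy
      · rw [geodesic_coe_coe_self]; exact isPreconnected_empty
      · rw [geodesic_coe_coe]
        exact isPreconnected_circle ((x + y) / 2) (|y - x| / 2)
          (div_pos (abs_pos.mpr (sub_ne_zero.mpr (Ne.symm hxy))) two_pos)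

lemma separates_congr {a b p q : OnePoint ℝ} (h : geodesic a b = geodesic p q) {x y : ℍ} :
    Separates a b x y ↔ Separates p q x y := by
  unfold Separates
  rw [h]

lemma separates_of_lt_of_lt {p q : OnePoint ℝ} {f : ℍ → ℝ} (hf : Continuous f) {v : ℝ}
    (hg : geodesic p q = {z : ℍ | f z = v}) {z w : ℍ} (hz : f z < v) (hw : v < f w) :
    Separates p q z w := by
  have hzg : z ∉ geodesic p q := by rw [hg]; exact fun h => absurd h (ne_of_lt hz)
  have hwg : w ∉ geodesic p q := by rw [hg]; exact fun h => absurd h.symm (ne_of_lt hw)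
  refine ⟨hzg, hwg, fun hcomp => ?_⟩
  have hzc : z ∈ connectedComponentIn (geodesic p q)ᶜ z := mem_connectedComponentIn hzg
  have hwc : w ∈ connectedComponentIn (geodesic p q)ᶜ z := by
    rw [hcomp]; exact mem_connectedComponentIn hwg
  obtain ⟨u, hu, hfu⟩ := (isPreconnected_connectedComponentIn).intermediate_value hzc hwc
    hf.continuousOn ⟨hz.le, hw.le⟩
  have hucompl : u ∈ (geodesic p q)ᶜ := connectedComponentIn_subset _ _ hu
  exact hucompl (by rw [hg]; exact hfu)

lemma exists_sep_pair_vert {p q : OnePoint ℝ} (x : ℝ)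
    (hg : geodesic p q = {z : ℍ | (z : ℂ).re = x}) :
    ∃ z w : ℍ, Separates p q z w ∧ dist z w ≤ 1 := by
  set z : ℍ := UpperHalfPlane.mk (((x - 4⁻¹ : ℝ) : ℂ) + Complex.I) (by simp) with hzdef
  set w : ℍ := UpperHalfPlane.mk (((x + 4⁻¹ : ℝ) : ℂ) + Complex.I) (by simp) with hwdef
  have hfz : (z : ℂ).re = x - 4⁻¹ := by simp [hzdef]
  have hfw : (w : ℂ).re = x + 4⁻¹ := by simp [hwdef]
  refine ⟨z, w, separates_of_lt_of_lt (f := fun z : ℍ => (z : ℂ).re)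
    (Complex.continuous_re.comp UpperHalfPlane.continuous_coe) hg
    (by show (z : ℂ).re < x; rw [hfz]; linarith)
    (by show x < (w : ℂ).re; rw [hfw]; linarith), ?_⟩
  refine le_trans (UpperHalfPlane.dist_le_dist_coe_div_sqrt z w) ?_
  have him : z.im = 1 ∧ w.im = 1 := by
    constructor <;> simp [← UpperHalfPlane.coe_im, hzdef, hwdef]
  have hd : dist (z : ℂ) (w : ℂ) = 2⁻¹ := by
    rw [Complex.dist_eq]
    have : (z : ℂ) - (w : ℂ) = ((-(2⁻¹) : ℝ) : ℂ) := by
      simp only [hzdef, hwdef, UpperHalfPlane.coe_mk]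
      push_cast; ring
    rw [this, Complex.norm_real, Real.norm_eq_abs]
    norm_num
  rw [hd, him.1, him.2]
  norm_num

lemma exists_sep_pair_circle {p q : OnePoint ℝ} (m r : ℝ) (hr : 0 < r)
    (hg : geodesic p q = {z : ℍ | ‖(z : ℂ) - ((m : ℝ) : ℂ)‖ = r}) :
    ∃ z w : ℍ, Separates p q z w ∧ dist z w ≤ 1 := by
  set z : ℍ := UpperHalfPlane.mk (((m : ℝ) : ℂ) + ((3 * r / 4 : ℝ) : ℂ) * Complex.I)
    (by simp; linarith) with hzdef
  set w : ℍ := UpperHalfPlane.mk (((m : ℝ) : ℂ) + ((5 * r / 4 : ℝ) : ℂ) * Complex.I)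
    (by simp; linarith) with hwdef
  have hfz : ‖(z : ℂ) - ((m : ℝ) : ℂ)‖ = 3 * r / 4 := by
    simp only [hzdef, UpperHalfPlane.coe_mk, add_sub_cancel_left]
    rw [norm_mul, Complex.norm_real, Real.norm_eq_abs, Complex.norm_I, mul_one, abs_of_pos (by linarith)]
  have hfw : ‖(w : ℂ) - ((m : ℝ) : ℂ)‖ = 5 * r / 4 := by
    simp only [hwdef, UpperHalfPlane.coe_mk, add_sub_cancel_left]
    rw [norm_mul, Complex.norm_real, Real.norm_eq_abs, Complex.norm_I, mul_one, abs_of_pos (by linarith)]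
  refine ⟨z, w, separates_of_lt_of_lt
    (f := fun z : ℍ => ‖(z : ℂ) - ((m : ℝ) : ℂ)‖)
    (continuous_norm.comp (UpperHalfPlane.continuous_coe.sub continuous_const)) hg
    (by show ‖(z : ℂ) - ((m : ℝ) : ℂ)‖ < r; rw [hfz]; linarith)
    (by show r < ‖(w : ℂ) - ((m : ℝ) : ℂ)‖; rw [hfw]; linarith), ?_⟩
  refine le_trans (UpperHalfPlane.dist_le_dist_coe_div_sqrt z w) ?_
  have himz : z.im = 3 * r / 4 := by simp [← UpperHalfPlane.coe_im, hzdef]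
  have himw : w.im = 5 * r / 4 := by simp [← UpperHalfPlane.coe_im, hwdef]
  have hd : dist (z : ℂ) (w : ℂ) = r / 2 := by
    rw [Complex.dist_eq]
    have : (z : ℂ) - (w : ℂ) = ((-(r / 2) : ℝ) : ℂ) * Complex.I := by
      simp only [hzdef, hwdef, UpperHalfPlane.coe_mk]
      push_cast; ring
    rw [this, norm_mul, Complex.norm_real, Real.norm_eq_abs, Complex.norm_I, mul_one]
    rw [abs_of_nonpos (by linarith)]
    ring
  rw [hd, himz, himw]
  have hsq : r / 2 ≤ Real.sqrt (3 * r / 4 * (5 * r / 4)) := by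
    rw [show (r / 2 : ℝ) = Real.sqrt ((r / 2) ^ 2) from (Real.sqrt_sq (by linarith)).symm]
    apply Real.sqrt_le_sqrt
    nlinarith
  have hpos : 0 < Real.sqrt (3 * r / 4 * (5 * r / 4)) := by
    apply Real.sqrt_pos.mpr; nlinarith
  rw [div_le_one hpos]
  linarith

lemma exists_sep_pair {p q : OnePoint ℝ} (hne : (geodesic p q).Nonempty) :
    ∃ x y : ℍ, Separates p q x y ∧ dist x y ≤ 1 := by
  induction p using OnePoint.rec with
  | infty =>
    induction q using OnePoint.rec with
    | infty => rw [geodesic_infty_infty] at hne; exact absurd hne (by simp)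
    | coe y => exact exists_sep_pair_vert y (geodesic_infty_coe y)
  | coe x =>
    induction q using OnePoint.rec with
    | infty => exact exists_sep_pair_vert x (geodesic_coe_infty x)
    | coe y =>
      rcases eq_or_ne x y with rfl | hxy
      · rw [geodesic_coe_coe_self] at hne; exact absurd hne (by simp)
      · exact exists_sep_pair_circle ((x + y) / 2) (|y - x| / 2)
          (div_pos (abs_pos.mpr (sub_ne_zero.mpr (Ne.symm hxy))) two_pos)
          (geodesic_coe_coe x y)

lemma separates_subset (z u w : ℍ) :
    {pq : OnePoint ℝ × OnePoint ℝ | Separates pq.1 pq.2 z w} ⊆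
      ({pq : OnePoint ℝ × OnePoint ℝ | Separates pq.1 pq.2 z u} ∪
        {pq : OnePoint ℝ × OnePoint ℝ | Separates pq.1 pq.2 u w}) ∪
      {pq : OnePoint ℝ × OnePoint ℝ | u ∈ geodesic pq.1 pq.2} := by
  rintro ⟨p, q⟩ ⟨hz, hw, hne⟩
  by_cases hu : u ∈ geodesic p q
  · exact Or.inr hu
  · by_cases h1 : connectedComponentIn (geodesic p q)ᶜ z = connectedComponentIn (geodesic p q)ᶜ u
    · exact Or.inl (Or.inr ⟨hu, hw, fun h2 => hne (h1.trans h2)⟩)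
    · exact Or.inl (Or.inl ⟨hz, hu, h1⟩)

instance : SecondCountableTopology (OnePoint ℝ) := by
  classical
  let B : Set (Set (OnePoint ℝ)) :=
    ((fun s : Set ℝ => ((↑) : ℝ → OnePoint ℝ) '' s) '' TopologicalSpace.countableBasis ℝ) ∪
      (⋃ a : ℚ, ⋃ b : ℚ, {(((↑) : ℝ → OnePoint ℝ) '' Icc (a : ℝ) (b : ℝ))ᶜ})
  have hB : TopologicalSpace.IsTopologicalBasis B := by
    refine TopologicalSpace.isTopologicalBasis_of_isOpen_of_nhds ?_ ?_
    · rintro u (⟨s, hs, rfl⟩ | hu)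
      · exact OnePoint.isOpen_image_coe.2 (TopologicalSpace.isOpen_of_mem_countableBasis hs)
      · simp only [mem_iUnion, mem_singleton_iff] at hu
        obtain ⟨a, b, rfl⟩ := hu
        exact OnePoint.isOpen_compl_image_coe.2 ⟨isClosed_Icc, isCompact_Icc⟩
    · intro a u hau hu
      induction a using OnePoint.rec with
      | infty =>
        have hK : IsCompact (((↑) : ℝ → OnePoint ℝ) ⁻¹' u)ᶜ := (OnePoint.isOpen_def.mp hu).1 hau
        obtain ⟨rad, hrad⟩ := hK.isBounded.subset_closedBall 0
        obtain ⟨qa, hqa⟩ := exists_rat_lt (-rad)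
        obtain ⟨qb, hqb⟩ := exists_rat_gt rad
        refine ⟨(((↑) : ℝ → OnePoint ℝ) '' Icc (qa : ℝ) (qb : ℝ))ᶜ,
          Or.inr (mem_iUnion.2 ⟨qa, mem_iUnion.2 ⟨qb, rfl⟩⟩),
          OnePoint.infty_notMem_image_coe, ?_⟩
        intro v hv
        induction v using OnePoint.rec with
        | infty => exact hau
        | coe t =>
          have ht : t ∉ Icc (qa : ℝ) (qb : ℝ) := fun h => hv (mem_image_of_mem _ h)
          by_contra h
          have htK : t ∈ (((↑) : ℝ → OnePoint ℝ) ⁻¹' u)ᶜ := h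
          have := hrad htK
          rw [Real.closedBall_eq_Icc] at this
          exact ht ⟨by linarith [this.1], by linarith [this.2]⟩
      | coe t =>
        have hpre : IsOpen (((↑) : ℝ → OnePoint ℝ) ⁻¹' u) := (OnePoint.isOpen_def.mp hu).2
        obtain ⟨s, hsB, hts, hsu⟩ :=
          (TopologicalSpace.isBasis_countableBasis ℝ).exists_subset_of_mem_open hau hpre
        exact ⟨((↑) : ℝ → OnePoint ℝ) '' s, Or.inl ⟨s, hsB, rfl⟩, ⟨t, hts, rfl⟩,
          image_subset_iff.2 hsu⟩
  refine hB.secondCountableTopology ?_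
  exact ((TopologicalSpace.countable_countableBasis ℝ).image _).union
    (countable_iUnion fun a => countable_iUnion fun b => countable_singleton _)

lemma compl_mSupport_null (μ : Measure (OnePoint ℝ × OnePoint ℝ)) :
    μ (mSupport μ)ᶜ = 0 := by
  classical
  set B := TopologicalSpace.countableBasis (OnePoint ℝ × OnePoint ℝ) with hB
  have hsub : (mSupport μ)ᶜ ⊆ ⋃₀ {U ∈ B | μ U = 0} := by
    intro x hx
    simp only [mSupport, mem_compl_iff, mem_setOf_eq, not_forall] at hx
    obtain ⟨U, hUo, hxU, hU0⟩ := hx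
    have hU0' : μ U = 0 := le_antisymm (not_lt.mp hU0) zero_le
    obtain ⟨V, hVB, hxV, hVU⟩ :=
      (TopologicalSpace.isBasis_countableBasis _).exists_subset_of_mem_open hxU hUo
    exact ⟨V, ⟨hVB, le_antisymm ((measure_mono hVU).trans_eq hU0') zero_le⟩, hxV⟩
  refine measure_mono_null hsub ?_
  rw [measure_sUnion_null_iff ((TopologicalSpace.countable_countableBasis _).mono
    (sep_subset _ _))]
  exact fun s hs => hs.2

lemma not_separates_of_disjoint {a b p q : OnePoint ℝ} (hd : geodesic a b ∩ geodesic p q = ∅)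
    {z w : ℍ} (hz : z ∈ geodesic p q) (hw : w ∈ geodesic p q) : ¬ Separates a b z w := by
  rintro ⟨hza, hwa, hne⟩
  have hsub : geodesic p q ⊆ (geodesic a b)ᶜ := by
    intro u hu hu'
    exact absurd (Set.mem_inter hu' hu) (by rw [hd]; exact notMem_empty u)
  have h1 : geodesic p q ⊆ connectedComponentIn (geodesic a b)ᶜ z :=
    (isPreconnected_geodesic p q).subset_connectedComponentIn hz hsub
  exact hne (connectedComponentIn_eq (h1 hw))

lemma interNum_leaf_zero (L : MeasuredLamination) {p q : OnePoint ℝ}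
    (hpq : (p, q) ∈ mSupport L.μ) {z w : ℍ}
    (hz : z ∈ geodesic p q) (hw : w ∈ geodesic p q) : interNum L z w = 0 := by
  have hpq' : p ≠ q := ne_of_mem_geodesic hz
  refine measure_mono_null ?_ (measure_union_null L.diag_null (compl_mSupport_null L.μ))
  rintro ⟨a, b⟩ hab
  by_cases hdiag : a = b
  · exact Or.inl hdiag
  by_cases hsupp : (a, b) ∈ mSupport L.μ
  · exfalso
    rcases L.unlinked _ hsupp _ hpq hdiag hpq' with heq | hdisj
    · exact hab.1 (heq ▸ hz)
    · exact not_separates_of_disjoint hdisj hz hw hab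
  · exact Or.inr hsupp

lemma through_point_bound (L : MeasuredLamination) {C : ℝ}
    (hC : ∀ z w : UpperHalfPlane, dist z w ≤ 1 → interNum L z w ≤ ENNReal.ofReal C)
    {p q : OnePoint ℝ} (hpq : (p, q) ∈ mSupport L.μ) {u : ℍ} (hu : u ∈ geodesic p q) :
    L.μ {ab : OnePoint ℝ × OnePoint ℝ | u ∈ geodesic ab.1 ab.2} ≤ ENNReal.ofReal C := by
  have hpq' : p ≠ q := ne_of_mem_geodesic hu
  obtain ⟨x, y, hsep, hdxy⟩ := exists_sep_pair ⟨u, hu⟩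
  have hsub : {ab : OnePoint ℝ × OnePoint ℝ | u ∈ geodesic ab.1 ab.2} ⊆
      ({x : OnePoint ℝ × OnePoint ℝ | x.1 = x.2} ∪ (mSupport L.μ)ᶜ) ∪
      {pq : OnePoint ℝ × OnePoint ℝ | Separates pq.1 pq.2 x y} := by
    rintro ⟨a, b⟩ hab
    by_cases hdiag : a = b
    · exact Or.inl (Or.inl hdiag)
    by_cases hsupp : (a, b) ∈ mSupport L.μ
    · rcases L.unlinked _ hsupp _ hpq hdiag hpq' with heq | hdisj
      · exact Or.inr ((separates_congr heq).mpr hsep)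
      · exact absurd (show u ∈ geodesic a b ∩ geodesic p q from ⟨hab, hu⟩)
          (by rw [hdisj]; exact notMem_empty u)
    · exact Or.inl (Or.inr hsupp)
  calc L.μ {ab : OnePoint ℝ × OnePoint ℝ | u ∈ geodesic ab.1 ab.2}
      ≤ L.μ (({x : OnePoint ℝ × OnePoint ℝ | x.1 = x.2} ∪ (mSupport L.μ)ᶜ) ∪
        {pq : OnePoint ℝ × OnePoint ℝ | Separates pq.1 pq.2 x y}) := measure_mono hsub
    _ ≤ L.μ ({x : OnePoint ℝ × OnePoint ℝ | x.1 = x.2} ∪ (mSupport L.μ)ᶜ) +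
        L.μ {pq : OnePoint ℝ × OnePoint ℝ | Separates pq.1 pq.2 x y} := measure_union_le _ _
    _ = interNum L x y := by
        rw [measure_union_null L.diag_null (compl_mSupport_null _), zero_add]; rfl
    _ ≤ ENNReal.ofReal C := hC x y hdxy

lemma interNum_triangle (L : MeasuredLamination) (z u w : ℍ) :
    interNum L z w ≤ interNum L z u + interNum L u w +
      L.μ {ab : OnePoint ℝ × OnePoint ℝ | u ∈ geodesic ab.1 ab.2} := by
  refine le_trans (measure_mono (separates_subset z u w)) ?_
  refine le_trans (measure_union_le _ _) ?_
  exact add_le_add (measure_union_le _ _) le_rfl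

/-- If `λ₋, λ₊` are bounded measured geodesic laminations on ℍ²
that strongly fill, there are `ε > 0` and `L > 0` such that for any leaf `g(p,q)`
of `λ₊` and points `z₁, z₂` on it at distance at least `L`, and any leaf `g(p′,q′)`
of `λ₋` and points `w₁, w₂` on it at distance at least `L`, one of `z₁, z₂` is at
distance at least `ε` from the geodesic segment of `g(p′,q′)` between `w₁` and `w₂`. -/
theorem strongly_fill_leaves_not_parallel
    (lamM lamP : MeasuredLamination) (hM : lamM.Bounded) (hP : lamP.Bounded)
    (hfill : StronglyFill lamM lamP) :
    ∃ ε L : ℝ, 0 < ε ∧ 0 < L ∧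
      ∀ p q : OnePoint ℝ, (p, q) ∈ mSupport lamP.μ →
      ∀ z₁ z₂ : UpperHalfPlane, z₁ ∈ geodesic p q → z₂ ∈ geodesic p q →
        L ≤ dist z₁ z₂ →
      ∀ p' q' : OnePoint ℝ, (p', q') ∈ mSupport lamM.μ →
      ∀ w₁ w₂ : UpperHalfPlane, w₁ ∈ geodesic p' q' → w₂ ∈ geodesic p' q' →
        L ≤ dist w₁ w₂ →
        ε ≤ max
          (Metric.infDist z₁ {w ∈ geodesic p' q' | dist w₁ w + dist w w₂ = dist w₁ w₂})
          (Metric.infDist z₂ {w ∈ geodesic p' q' | dist w₁ w + dist w w₂ = dist w₁ w₂}) := by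
  obtain ⟨C, hCpos, hCb⟩ := hM
  obtain ⟨c, hcpos, hfill'⟩ := hfill (4 * C + 1) (by linarith)
  refine ⟨1, max c 1, one_pos, lt_max_of_lt_right one_pos, ?_⟩
  intro p q hpq z₁ z₂ hz₁ hz₂ hdz p' q' hp'q' w₁ w₂ hw₁ hw₂ hdw
  by_contra hcon
  push_neg at hcon
  rw [max_lt_iff] at hcon
  obtain ⟨h₁, h₂⟩ := hcon
  have hγne : {w ∈ geodesic p' q' | dist w₁ w + dist w w₂ = dist w₁ w₂}.Nonempty :=
    ⟨w₁, hw₁, by simp⟩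
  obtain ⟨u₁, hu₁γ, hu₁⟩ := (Metric.infDist_lt_iff hγne).mp h₁
  obtain ⟨u₂, hu₂γ, hu₂⟩ := (Metric.infDist_lt_iff hγne).mp h₂
  have hu₁g : u₁ ∈ geodesic p' q' := hu₁γ.1
  have hu₂g : u₂ ∈ geodesic p' q' := hu₂γ.1
  have hT₁ : lamM.μ {ab : OnePoint ℝ × OnePoint ℝ | u₁ ∈ geodesic ab.1 ab.2} ≤
      ENNReal.ofReal C := through_point_bound lamM hCb hp'q' hu₁g
  have hT₂ : lamM.μ {ab : OnePoint ℝ × OnePoint ℝ | u₂ ∈ geodesic ab.1 ab.2} ≤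
      ENNReal.ofReal C := through_point_bound lamM hCb hp'q' hu₂g
  have hI₁ : interNum lamM z₁ u₁ ≤ ENNReal.ofReal C := hCb _ _ hu₁.le
  have hI₂ : interNum lamM u₂ z₂ ≤ ENNReal.ofReal C := hCb _ _ (by
    rw [dist_comm]; exact hu₂.le)
  have hmid : interNum lamM u₁ u₂ = 0 := interNum_leaf_zero lamM hp'q' hu₁g hu₂g
  have hMtot : interNum lamM z₁ z₂ ≤
      ENNReal.ofReal C + (ENNReal.ofReal C + ENNReal.ofReal C) + ENNReal.ofReal C := by
    refine le_trans (interNum_triangle lamM z₁ u₁ z₂) ?_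
    refine add_le_add (add_le_add hI₁ ?_) hT₁
    refine le_trans (interNum_triangle lamM u₁ u₂ z₂) ?_
    rw [hmid, zero_add]
    exact add_le_add hI₂ hT₂
  have hP0 : interNum lamP z₁ z₂ = 0 := interNum_leaf_zero lamP hpq hz₁ hz₂
  have hge : ENNReal.ofReal (4 * C + 1) ≤ interNum lamM z₁ z₂ + interNum lamP z₁ z₂ :=
    hfill' z₁ z₂ (le_trans (le_max_left c 1) hdz)
  rw [hP0, add_zero] at hge
  have h4 : ENNReal.ofReal C + (ENNReal.ofReal C + ENNReal.ofReal C) + ENNReal.ofReal C =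
      ENNReal.ofReal (4 * C) := by
    rw [← ENNReal.ofReal_add hCpos.le hCpos.le,
      ← ENNReal.ofReal_add hCpos.le (by positivity),
      ← ENNReal.ofReal_add (by positivity) hCpos.le]
    congr 1
    ring
  have hfin : ENNReal.ofReal (4 * C + 1) ≤ ENNReal.ofReal (4 * C) :=
    le_trans hge (by rw [← h4]; exact hMtot)
  have := (ENNReal.ofReal_le_ofReal_iff (by positivity)).mp hfin
  linarith

end
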